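/- If f : ℝ → ℝ is lacunarily statistically ward continuous, then f is lacunarily statistically continuous: whenever a sequence (α_n) converges lacunary statistically to α_0, the sequence (f(α_n)) converges lacunary statistically to f(α_0). -/

import Mathlib

open Filter Finset Topology

/-- A sequence `x` converges statistically to `ℓ`. -/
def StatConvTo (x : ℕ → ℝ) (ℓ : ℝ) : Prop :=
  ∀ ε > 0, Tendsto (fun n : ℕ =>
      ((((Finset.range n).filter fun k => ε ≤ |x k - ℓ|).card : ℝ) / (n : ℝ)))
    atTop (𝓝 0)

/-- A sequence is statistically quasi-Cauchy if its difference sequence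
converges statistically to `0`. -/
def StatQC (a : ℕ → ℝ) : Prop :=
  StatConvTo (fun n => a (n + 1) - a n) 0

/-- A lacunary sequence `θ = (k_r)`: strictly increasing, `k 0 = 0`,
and `h_r = k_{r+1} - k_r → ∞`. -/
structure Lacunary where
  k : ℕ → ℕ
  strictMono : StrictMono k
  zero : k 0 = 0
  h_tendsto : Tendsto (fun r => k (r + 1) - k r) atTop atTop

/-- Lacunary statistical convergence of `x` to `ℓ` with respect to `θ`. -/
def LacStatConvTo (θ : Lacunary) (x : ℕ → ℝ) (ℓ : ℝ) : Prop :=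
  ∀ ε > 0, Tendsto (fun r : ℕ =>
      ((((Finset.Ioc (θ.k r) (θ.k (r + 1))).filter fun i => ε ≤ |x i - ℓ|).card : ℝ)
        / ((θ.k (r + 1) - θ.k r : ℕ) : ℝ)))
    atTop (𝓝 0)

/-- A sequence is lacunarily statistically quasi-Cauchy (w.r.t. `θ`). -/
def LacStatQC (θ : Lacunary) (a : ℕ → ℝ) : Prop :=
  LacStatConvTo θ (fun n => a (n + 1) - a n) 0

/-- `liminf q_r > 1` where `q_r = k_{r+1} / k_r`. -/
def LiminfQGtOne (θ : Lacunary) : Prop :=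
  ∃ a : ℝ, 1 < a ∧ ∀ᶠ r in atTop, a ≤ (θ.k (r + 1) : ℝ) / (θ.k r : ℝ)

/-- `limsup q_r < ∞` where `q_r = k_{r+1} / k_r`. -/
def LimsupQLtTop (θ : Lacunary) : Prop :=
  ∃ H : ℝ, ∀ᶠ r in atTop, (θ.k (r + 1) : ℝ) / (θ.k r : ℝ) ≤ H

/-- `A` is lacunarily statistically ward compact w.r.t. `θ`. -/
def LacStatWardCompact (θ : Lacunary) (A : Set ℝ) : Prop :=
  ∀ x : ℕ → ℝ, (∀ n, x n ∈ A) →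
    ∃ φ : ℕ → ℕ, StrictMono φ ∧ LacStatQC θ (x ∘ φ)

/-- `f` is lacunarily statistically ward continuous on `A` w.r.t. `θ`. -/
def LacStatWardContOn (θ : Lacunary) (f : ℝ → ℝ) (A : Set ℝ) : Prop :=
  ∀ x : ℕ → ℝ, (∀ n, x n ∈ A) → LacStatQC θ x → LacStatQC θ (f ∘ x)

/-- Any sequence whose difference sequence tends to `0` in the ordinary sense is
lacunarily statistically quasi-Cauchy. -/
lemma lacStatQC_of_tendsto (θ : Lacunary) (b : ℕ → ℝ)
    (hb : Tendsto (fun n => b (n + 1) - b n) atTop (𝓝 0)) : LacStatQC θ b := by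
  intro ε hε
  have hsmall : ∀ᶠ n in atTop, |b (n + 1) - b n - 0| < ε := by
    have := Metric.tendsto_atTop.mp hb ε hε
    simpa [Real.dist_eq] using this
  obtain ⟨N, hN⟩ := eventually_atTop.mp hsmall
  have hev : ∀ᶠ r in atTop,
      ((((Finset.Ioc (θ.k r) (θ.k (r + 1))).filter
          fun i => ε ≤ |(fun n => b (n + 1) - b n) i - 0|).card : ℝ)
        / ((θ.k (r + 1) - θ.k r : ℕ) : ℝ)) = 0 := by
    filter_upwards [eventually_ge_atTop N] with r hr
    have hempty : ((Finset.Ioc (θ.k r) (θ.k (r + 1))).filter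
        fun i => ε ≤ |(fun n => b (n + 1) - b n) i - 0|) = ∅ := by
      apply Finset.filter_false_of_mem
      intro i hi
      simp only [Finset.mem_Ioc] at hi
      have hiN : N ≤ i := le_trans (le_trans hr (θ.strictMono.le_apply)) (le_of_lt hi.1)
      exact not_le.mpr (hN i hiN)
    rw [hempty]
    simp
  exact Tendsto.congr' (hev.mono fun r h => h.symm) tendsto_const_nhds

/-- Lacunarily statistically ward continuous functions are continuous in the ε-δ sense. -/
lemma cont_of_lacStatWardCont (θ : Lacunary) (f : ℝ → ℝ)
    (hf : ∀ a : ℕ → ℝ, LacStatQC θ a → LacStatQC θ (f ∘ a)) (a₀ : ℝ) :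
    ∀ ε > 0, ∃ δ > 0, ∀ t : ℝ, |t - a₀| < δ → |f t - f a₀| < ε := by
  intro ε hε
  by_contra hcon
  push_neg at hcon
  have hchoice : ∀ m : ℕ, ∃ t : ℝ, |t - a₀| < 1 / (m + 1) ∧ ε ≤ |f t - f a₀| := by
    intro m
    obtain ⟨t, ht1, ht2⟩ := hcon (1 / (m + 1)) (by positivity)
    exact ⟨t, ht1, ht2⟩
  choose t ht1 ht2 using hchoice
  set b : ℕ → ℝ := fun n => if n % 2 = 0 then a₀ else t (n / 2) with hbdef
  have hdiff : ∀ n : ℕ, |b (n + 1) - b n| = |t (n / 2) - a₀| := by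
    intro n
    rcases Nat.even_or_odd n with he | ho
    · obtain ⟨m, rfl⟩ := he
      have h1 : (m + m) % 2 = 0 := by omega
      have h2 : (m + m + 1) % 2 = 1 := by omega
      have h3 : (m + m + 1) / 2 = (m + m) / 2 := by omega
      simp [hbdef, h1, h2, h3]
    · obtain ⟨m, rfl⟩ := ho
      have h1 : (2 * m + 1) % 2 = 1 := by omega
      have h2 : (2 * m + 1 + 1) % 2 = 0 := by omega
      simp only [hbdef, h1, h2]
      rw [abs_sub_comm]
      norm_num
  have hfdiff : ∀ n : ℕ, |f (b (n + 1)) - f (b n)| = |f (t (n / 2)) - f a₀| := by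
    intro n
    rcases Nat.even_or_odd n with he | ho
    · obtain ⟨m, rfl⟩ := he
      have h1 : (m + m) % 2 = 0 := by omega
      have h2 : (m + m + 1) % 2 = 1 := by omega
      have h3 : (m + m + 1) / 2 = (m + m) / 2 := by omega
      simp [hbdef, h1, h2, h3]
    · obtain ⟨m, rfl⟩ := ho
      have h1 : (2 * m + 1) % 2 = 1 := by omega
      have h2 : (2 * m + 1 + 1) % 2 = 0 := by omega
      simp only [hbdef, h1, h2]
      rw [abs_sub_comm]
      norm_num
  have hbQC : LacStatQC θ b := by
    apply lacStatQC_of_tendsto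
    rw [Metric.tendsto_atTop]
    intro ε' hε'
    obtain ⟨M, hM⟩ := exists_nat_gt (1 / ε')
    refine ⟨2 * M + 2, fun n hn => ?_⟩
    rw [Real.dist_eq, sub_zero]
    rw [hdiff n]
    have hlt : |t (n / 2) - a₀| < 1 / (((n / 2 : ℕ) : ℝ) + 1) := ht1 (n / 2)
    have hM2 : (M : ℝ) < (n / 2 + 1 : ℕ) := by
      have : M + 1 ≤ n / 2 + 1 := by omega
      exact_mod_cast Nat.lt_of_lt_of_le (Nat.lt_succ_self M) this
    have hMpos : (0:ℝ) < (n / 2 + 1 : ℕ) := by positivity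
    calc |t (n / 2) - a₀| < 1 / (((n / 2 : ℕ) : ℝ) + 1) := hlt
      _ ≤ 1 / (M : ℝ) := by
          apply one_div_le_one_div_of_le
          · have h1 : (1:ℝ) / ε' < M := hM
            have : (0:ℝ) < 1 / ε' := by positivity
            linarith
          · push_cast at hM2 ⊢; linarith
      _ < ε' := by
          rw [div_lt_iff₀ (lt_trans (by positivity) hM)]
          rw [div_lt_iff₀ hε'] at hM
          linarith [mul_comm (M:ℝ) ε']
  have hfQC := hf b hbQC
  have h1 := hfQC ε hε
  have hone : ∀ r : ℕ,
      ((((Finset.Ioc (θ.k r) (θ.k (r + 1))).filter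
          fun i => ε ≤ |(fun n => (f ∘ b) (n + 1) - (f ∘ b) n) i - 0|).card : ℝ)
        / ((θ.k (r + 1) - θ.k r : ℕ) : ℝ)) = 1 := by
    intro r
    have hfull : ((Finset.Ioc (θ.k r) (θ.k (r + 1))).filter
        fun i => ε ≤ |(fun n => (f ∘ b) (n + 1) - (f ∘ b) n) i - 0|)
        = Finset.Ioc (θ.k r) (θ.k (r + 1)) := by
      apply Finset.filter_true_of_mem
      intro i _
      simp only [Function.comp_apply, sub_zero]
      rw [hfdiff i]
      exact ht2 (i / 2)
    rw [hfull, Nat.card_Ioc]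
    have hpos : 0 < θ.k (r + 1) - θ.k r := by
      have := θ.strictMono (show r < r + 1 by omega)
      omega
    have hposR : (0:ℝ) < ((θ.k (r + 1) - θ.k r : ℕ) : ℝ) := by exact_mod_cast hpos
    rw [div_self hposR.ne']
  have h2 : Tendsto (fun _ : ℕ => (1:ℝ)) atTop (𝓝 0) :=
    h1.congr hone
  have := tendsto_nhds_unique h2 tendsto_const_nhds
  norm_num at this

theorem lacStatWardCont_implies_lacStatCont (θ : Lacunary) (hθ : LiminfQGtOne θ)
    (f : ℝ → ℝ) (hf : ∀ a : ℕ → ℝ, LacStatQC θ a → LacStatQC θ (f ∘ a)) :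
    ∀ (a : ℕ → ℝ) (a₀ : ℝ), LacStatConvTo θ a a₀ → LacStatConvTo θ (f ∘ a) (f a₀) := by
  intro a a₀ ha ε hε
  obtain ⟨δ, hδ, hcont⟩ := cont_of_lacStatWardCont θ f hf a₀ ε hε
  have hδconv := ha δ hδ
  apply squeeze_zero (fun r => by positivity) _ hδconv
  intro r
  have hpos : 0 < θ.k (r + 1) - θ.k r := by
    have := θ.strictMono (show r < r + 1 by omega)
    omega
  have hposR : (0:ℝ) < ((θ.k (r + 1) - θ.k r : ℕ) : ℝ) := by exact_mod_cast hpos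
  gcongr (Finset.card (Finset.filter (fun i => ?_) _) : ℝ) / _ with i
  intro hi
  by_contra h
  push_neg at h
  exact absurd (hcont (a i) h) (not_lt.mpr hi)
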